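/- arXiv:1312.0693 — 2 statements merged into one kernel-verified Lean document; each statement's English description precedes it below -/
import Mathlib

section
/- The number of compositions of n into odd parts equals the number of compositions of n+1 into parts greater than one. -/
private def bump : List ℕ → List ℕ
  | [] => [1]
  | a :: l => (a + 1) :: l

private def fwd : List ℕ → List ℕ
  | [] => [1]
  | a :: l => if a ≤ 1 then bump (fwd l) else 2 :: fwd ((a - 2) :: l)
termination_by l => l.sum + l.length
decreasing_by all_goals simp_all [List.sum_cons]; omega

private def bwd : List ℕ → List ℕ
  | [] => []
  | c :: rest => if c ≤ 2 then
      (match bwd rest with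
       | [] => [1]
       | x :: r => (x + 2) :: r)
    else 1 :: bwd ((c - 1) :: rest)
termination_by l => l.sum + l.length
decreasing_by all_goals simp_all [List.sum_cons]; omega

private lemma bump_sum (m : List ℕ) : (bump m).sum = m.sum + 1 := by
  cases m <;> simp [bump] <;> omega

private lemma fwd_sum (l : List ℕ) (h : ∀ x ∈ l, Odd x) : (fwd l).sum = l.sum + 1 := by
  induction l using fwd.induct with
  | case1 => simp [fwd]
  | case2 a l ha ih =>
    have h1 : Odd a := h a (by simp)
    have : a = 1 := by rw [Nat.odd_iff] at h1; omega
    rw [fwd, if_pos ha, bump_sum, ih (fun x hx => h x (by simp [hx]))]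
    simp only [List.sum_cons]
    omega
  | case3 a l ha ih =>
    have h1 : Odd a := h a (by simp)
    rw [Nat.odd_iff] at h1
    rw [fwd, if_neg ha]
    have hodd : ∀ x ∈ (a - 2) :: l, Odd x := by
      intro x hx
      rcases List.mem_cons.mp hx with rfl | hx
      · rw [Nat.odd_iff]; omega
      · exact h x (by simp [hx])
    simp only [List.sum_cons, ih hodd]
    omega

private lemma fwd_shape (l : List ℕ) :
    ∃ h t, fwd l = h :: t ∧ 1 ≤ h ∧ (∀ x ∈ t, 2 ≤ x) ∧ (l ≠ [] → 2 ≤ h) := by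
  induction l using fwd.induct with
  | case1 => exact ⟨1, [], by simp [fwd]⟩
  | case2 a l ha ih =>
    obtain ⟨h, t, he, h1, h2, h3⟩ := ih
    refine ⟨h + 1, t, ?_, by omega, h2, fun _ => by omega⟩
    rw [fwd, if_pos ha, he]; rfl
  | case3 a l ha ih =>
    obtain ⟨h, t, he, h1, h2, h3⟩ := ih
    refine ⟨2, h :: t, ?_, by omega, ?_, fun _ => le_refl 2⟩
    · rw [fwd, if_neg ha, he]
    · intro x hx
      rcases List.mem_cons.mp hx with rfl | hx
      · exact h3 (by simp)
      · exact h2 x hx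

private lemma fwd_ne_nil (l : List ℕ) : fwd l ≠ [] := by
  obtain ⟨h, t, he, -⟩ := fwd_shape l
  simp [he]

private lemma bwd_fwd (l : List ℕ) (hodd : ∀ x ∈ l, Odd x) (hne : l ≠ []) :
    bwd (fwd l) = l := by
  induction l using fwd.induct with
  | case1 => exact absurd rfl hne
  | case2 a l ha ih =>
    have h1 : Odd a := hodd a (by simp)
    have ha1 : a = 1 := by rw [Nat.odd_iff] at h1; omega
    subst ha1
    rcases eq_or_ne l [] with rfl | hl
    · simp [fwd, bump, bwd]
    · obtain ⟨h, t, he, -, -, h3⟩ := fwd_shape l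
      have hh : 2 ≤ h := h3 hl
      rw [fwd, if_pos ha, he]
      show bwd ((h + 1) :: t) = 1 :: l
      rw [bwd, if_neg (by omega)]
      have : (h + 1 - 1) :: t = fwd l := by rw [he]; congr 1
      rw [this, ih (fun x hx => hodd x (by simp [hx])) hl]
  | case3 a l ha ih =>
    have h1 : Odd a := hodd a (by simp)
    rw [Nat.odd_iff] at h1
    have ha3 : 3 ≤ a := by omega
    have hodd' : ∀ x ∈ (a - 2) :: l, Odd x := by
      intro x hx
      rcases List.mem_cons.mp hx with rfl | hx
      · rw [Nat.odd_iff]; omega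
      · exact hodd x (by simp [hx])
    rw [fwd, if_neg ha]
    rw [bwd, if_pos (by omega)]
    rw [ih hodd' (by simp)]
    show (a - 2 + 2) :: l = a :: l
    congr 1; omega

private lemma bwd_ne_nil (m : List ℕ) (h : m ≠ []) : bwd m ≠ [] := by
  cases m with
  | nil => exact absurd rfl h
  | cons c rest =>
    rw [bwd]
    split
    · split <;> simp
    · simp

private lemma bwd_odd (m : List ℕ) (h : ∀ x ∈ m, 2 ≤ x) : ∀ x ∈ bwd m, Odd x := by
  induction m using bwd.induct with
  | case1 => simp [bwd]
  | case2 c rest hc hm ih =>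
    rw [bwd, if_pos hc, hm]
    intro x hx
    simp at hx
    subst hx; exact odd_one
  | case3 c rest hc y r hm ih =>
    rw [bwd, if_pos hc, hm]
    have ihr := ih (fun z hz => h z (by simp [hz]))
    rw [hm] at ihr
    intro x hx
    rcases List.mem_cons.mp hx with rfl | hx
    · have : Odd y := ihr y (by simp)
      rw [Nat.odd_iff] at this ⊢; omega
    · exact ihr x (by simp [hx])
  | case4 c rest hc ih =>
    rw [bwd, if_neg hc]
    intro x hx
    have hc2 : 2 ≤ c := h c (by simp)
    have hrest : ∀ z ∈ (c - 1) :: rest, 2 ≤ z := by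
      intro z hz
      rcases List.mem_cons.mp hz with rfl | hz
      · omega
      · exact h z (by simp [hz])
    rcases List.mem_cons.mp hx with rfl | hx
    · exact odd_one
    · exact ih hrest x hx

private lemma fwd_bwd (m : List ℕ) (h : ∀ x ∈ m, 2 ≤ x) (hne : m ≠ []) :
    fwd (bwd m) = m := by
  induction m using bwd.induct with
  | case1 => exact absurd rfl hne
  | case2 c rest hc hm ih =>
    have hc2 : c = 2 := by have := h c (by simp); omega
    have hr : rest = [] := by
      by_contra hr
      exact bwd_ne_nil rest hr hm
    subst hc2; subst hr
    rw [bwd, if_pos hc, hm]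
    show fwd [1] = [2]
    simp [fwd, bump]
  | case3 c rest hc x r hm ih =>
    have hc2 : c = 2 := by have := h c (by simp); omega
    subst hc2
    have hr : rest ≠ [] := by
      rintro rfl
      simp [bwd] at hm
    rw [bwd, if_pos hc, hm]
    show fwd ((x + 2) :: r) = 2 :: rest
    rw [fwd, if_neg (by omega)]
    have hxr : (x + 2 - 2) :: r = bwd rest := by rw [hm]; congr 1
    rw [hxr, ih (fun z hz => h z (by simp [hz])) hr]
  | case4 c rest hc ih =>
    rw [bwd, if_neg hc]
    have hc2 : 2 ≤ c := h c (by simp)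
    have hrest : ∀ z ∈ (c - 1) :: rest, 2 ≤ z := by
      intro z hz
      rcases List.mem_cons.mp hz with rfl | hz
      · omega
      · exact h z (by simp [hz])
    rw [fwd, if_pos (le_refl 1)]
    show bump (fwd (bwd ((c - 1) :: rest))) = c :: rest
    rw [ih hrest (by simp)]
    show (c - 1 + 1) :: rest = c :: rest
    congr 1; omega

/-- The number of compositions of `n` into odd parts equals the number of
compositions of `n+1` into parts greater than one. -/
theorem odd_comps_eq_gt_one_comps (n : ℕ) (hn : 1 ≤ n) :
    Nat.card {l : List ℕ // l.sum = n ∧ ∀ x ∈ l, Odd x} =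
    Nat.card {l : List ℕ // l.sum = n + 1 ∧ ∀ x ∈ l, 2 ≤ x} := by
  apply Nat.card_congr
  refine
    { toFun := fun ⟨l, hs, ho⟩ => ⟨fwd l, ?_, ?_⟩
      invFun := fun ⟨m, hs, h2⟩ => ⟨bwd m, ?_, ?_⟩
      left_inv := ?_
      right_inv := ?_ }
  · rw [fwd_sum l ho, hs]
  · have hne : l ≠ [] := by rintro rfl; simp at hs; omega
    obtain ⟨h, t, he, h1, h2, h3⟩ := fwd_shape l
    intro x hx
    rw [he] at hx
    rcases List.mem_cons.mp hx with rfl | hx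
    · exact h3 hne
    · exact h2 x hx
  · have hne : m ≠ [] := by rintro rfl; simp at hs
    have hodd := bwd_odd m h2
    have := fwd_sum (bwd m) hodd
    rw [fwd_bwd m h2 hne, hs] at this
    omega
  · exact bwd_odd m h2
  · rintro ⟨l, hs, ho⟩
    have hne : l ≠ [] := by rintro rfl; simp at hs; omega
    exact Subtype.ext (bwd_fwd l ho hne)
  · rintro ⟨m, hs, h2⟩
    have hne : m ≠ [] := by rintro rfl; simp at hs
    exact Subtype.ext (fwd_bwd m h2 hne)
end

section
/- The map sending a composition (a_1, ..., a_{2m+1}) of n, in which every even-indexed part equals 1, to the composition (a_1 + a_2, a_3 + a_4, ..., a_{2m-1} + a_{2m}, a_{2m+1}) is a bijection between compositions of n with an odd number of parts whose even-indexed parts all equal 1, and compositions of n whose parts are all ≥ 2 except possibly the last part. -/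
/-- Sum adjacent pairs of parts: `(a₁, a₂, a₃, a₄, ..., a_{2m+1}) ↦
(a₁ + a₂, a₃ + a₄, ..., a_{2m-1} + a_{2m}, a_{2m+1})`. -/
def pairSum : List ℕ → List ℕ
  | [] => []
  | [a] => [a]
  | a :: b :: rest => (a + b) :: pairSum rest

/-- Inverse map: split each non-last part `a` into `(a-1, 1)`. -/
def expand : List ℕ → List ℕ
  | [] => []
  | [a] => [a]
  | a :: b :: rest => (a - 1) :: 1 :: expand (b :: rest)

lemma pairSum_sum (l : List ℕ) : (pairSum l).sum = l.sum := by
  induction l using pairSum.induct <;> simp [pairSum, *] <;> omega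

lemma pairSum_eq_nil (l : List ℕ) : pairSum l = [] ↔ l = [] := by
  cases l with
  | nil => simp [pairSum]
  | cons a t => cases t <;> simp [pairSum]

lemma pairSum_pos (l : List ℕ) (h : ∀ x ∈ l, 0 < x) :
    ∀ x ∈ pairSum l, 0 < x := by
  induction l using pairSum.induct with
  | case1 => simp [pairSum]
  | case2 a => simpa [pairSum] using h
  | case3 a b rest ih =>
    intro x hx
    simp only [pairSum, List.mem_cons] at hx
    rcases hx with rfl | hx
    · have := h a (by simp); omega
    · exact ih (fun y hy => h y (by simp [hy])) x hx

lemma pairSum_ge2 (l : List ℕ) (h : ∀ x ∈ l, 0 < x) :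
    ∀ i : ℕ, i + 1 < (pairSum l).length → (hi : i < (pairSum l).length) →
      2 ≤ (pairSum l)[i] := by
  induction l using pairSum.induct with
  | case1 => simp [pairSum]
  | case2 a => simp [pairSum]
  | case3 a b rest ih =>
    intro i hi1 hi2
    simp only [pairSum] at hi1 hi2 ⊢
    cases i with
    | zero =>
      have ha := h a (by simp)
      have hb := h b (by simp)
      simp only [List.getElem_cons_zero]
      omega
    | succ j =>
      simp only [List.getElem_cons_succ]
      exact ih (fun y hy => h y (by simp [hy])) j
        (by simpa using hi1) (by simpa using hi2)

lemma expand_pairSum (l : List ℕ)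
    (h1 : ∀ i : ℕ, (hi : 2 * i + 1 < l.length) → l[2 * i + 1] = 1)
    (h2 : Odd l.length) : expand (pairSum l) = l := by
  induction l using pairSum.induct with
  | case1 => simp [pairSum, expand]
  | case2 a => simp [pairSum, expand]
  | case3 a b rest ih =>
    have hb : b = 1 := by
      have := h1 0 (by simp)
      simpa using this
    have hodd : Odd rest.length := by
      rcases h2 with ⟨k, hk⟩
      simp only [List.length_cons] at hk
      exact ⟨k - 1, by omega⟩
    have hrest : ∀ i : ℕ, (hi : 2 * i + 1 < rest.length) → rest[2 * i + 1] = 1 := by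
      intro i hi
      have h' : 2 * (i + 1) + 1 < (a :: b :: rest).length := by simp; omega
      have := h1 (i + 1) h'
      have heq : 2 * (i + 1) + 1 = (2 * i + 1) + 2 := by omega
      simp only [heq] at this
      simpa using this
    have ihr := ih hrest hodd
    have hrne : rest ≠ [] := by
      rintro rfl
      rcases hodd with ⟨k, hk⟩
      simp at hk
    have hpn : pairSum rest ≠ [] := by rwa [Ne, pairSum_eq_nil]
    obtain ⟨d, ds, hp⟩ := List.exists_cons_of_ne_nil hpn
    show expand ((a + b) :: pairSum rest) = a :: b :: rest
    rw [hp]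
    simp only [expand]
    rw [← hp, ihr]
    subst hb
    simp

lemma pairSum_expand (l : List ℕ) (h : ∀ x ∈ l, 0 < x) :
    pairSum (expand l) = l := by
  induction l using expand.induct with
  | case1 => simp [pairSum, expand]
  | case2 a => simp [pairSum, expand]
  | case3 a b rest ih =>
    have ha := h a (by simp)
    simp only [expand, pairSum]
    rw [ih (fun y hy => h y (by simp at hy ⊢; tauto))]
    congr 1
    omega

lemma expand_sum (l : List ℕ) (h : ∀ x ∈ l, 0 < x) :
    (expand l).sum = l.sum := by
  induction l using expand.induct with
  | case1 => simp [expand]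
  | case2 a => simp [expand]
  | case3 a b rest ih =>
    have ha := h a (by simp)
    simp only [expand, List.sum_cons]
    rw [ih (fun y hy => h y (by simp at hy ⊢; tauto))]
    simp only [List.sum_cons]
    omega

lemma expand_pos (l : List ℕ) (h : ∀ x ∈ l, 0 < x)
    (h2 : ∀ i : ℕ, i + 1 < l.length → (hi : i < l.length) → 2 ≤ l[i]) :
    ∀ x ∈ expand l, 0 < x := by
  induction l using expand.induct with
  | case1 => simp [expand]
  | case2 a => simpa [expand] using h
  | case3 a b rest ih =>
    intro x hx
    have ha : 2 ≤ a := by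
      have := h2 0 (by simp) (by simp)
      simpa using this
    simp only [expand, List.mem_cons] at hx
    rcases hx with rfl | rfl | hx
    · omega
    · omega
    · refine ih (fun y hy => h y (by simp at hy ⊢; tauto)) ?_ x hx
      intro i hi1 hi2
      have := h2 (i + 1) (by simp at hi1 ⊢; omega) (by simp at hi2 ⊢; omega)
      simpa using this

lemma expand_length_odd (l : List ℕ) (h : l ≠ []) : Odd (expand l).length := by
  induction l using expand.induct with
  | case1 => exact absurd rfl h
  | case2 a => simp [expand]
  | case3 a b rest ih =>
    rcases ih (by simp) with ⟨k, hk⟩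
    exact ⟨k + 1, by simp [expand, hk]; omega⟩

lemma expand_even_one (l : List ℕ) :
    ∀ i : ℕ, (hi : 2 * i + 1 < (expand l).length) → (expand l)[2 * i + 1] = 1 := by
  induction l using expand.induct with
  | case1 => simp [expand]
  | case2 a => intro i hi; simp [expand] at hi
  | case3 a b rest ih =>
    intro i hi
    cases i with
    | zero => simp [expand]
    | succ j =>
      have hi' : 2 * j + 1 < (expand (b :: rest)).length := by
        simp only [expand, List.length_cons] at hi; omega
      show ((a - 1) :: 1 :: expand (b :: rest))[2 * j + 1 + 2]'(by
        simp only [List.length_cons]; omega) = 1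
      simp only [List.getElem_cons_succ]
      exact ih j hi'

/-- Summing adjacent pairs is a bijection between compositions of `n` with an
odd number of parts whose even-indexed (1-based) parts all equal `1`, and
compositions of `n` whose parts are all `≥ 2` except possibly the last. -/
theorem pairSum_bijection (n : ℕ) (hn : 1 ≤ n) :
    Set.BijOn pairSum
      {l : List ℕ | l.sum = n ∧ (∀ x ∈ l, 0 < x) ∧ Odd l.length ∧
        ∀ i : ℕ, (hi : 2 * i + 1 < l.length) → l[2 * i + 1] = 1}
      {l : List ℕ | l.sum = n ∧ (∀ x ∈ l, 0 < x) ∧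
        ∀ i : ℕ, i + 1 < l.length → (hi : i < l.length) → 2 ≤ l[i]} := by
  refine ⟨?_, ?_, ?_⟩
  · rintro l ⟨hsum, hpos, hodd, hone⟩
    exact ⟨by rw [pairSum_sum]; exact hsum, pairSum_pos l hpos,
      pairSum_ge2 l hpos⟩
  · rintro a ⟨_, _, haodd, haone⟩ b ⟨_, _, hbodd, hbone⟩ hab
    rw [← expand_pairSum a haone haodd, ← expand_pairSum b hbone hbodd, hab]
  · rintro l ⟨hsum, hpos, h2⟩
    have hne : l ≠ [] := by
      rintro rfl; simp at hsum; omega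
    exact ⟨expand l,
      ⟨by rw [expand_sum l hpos]; exact hsum, expand_pos l hpos h2,
        expand_length_odd l hne, expand_even_one l⟩,
      pairSum_expand l hpos⟩
end
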